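/- Let G be a graph of order n and H an induced subgraph of G of order k. Then th₊(G) ≤ n − k + th₊(H). -/

import Mathlib

open SimpleGraph

/-- Reachability in `G` avoiding the blue set `B` (i.e., within a white component). -/
def offReach {V : Type*} (G : SimpleGraph V) (B : Set V) : V → V → Prop :=
  Relation.ReflTransGen (fun a b => G.Adj a b ∧ a ∉ B ∧ b ∉ B)

/-- The positive semidefinite color change rule: a blue vertex `v` forces a white vertex `w`
if `w` is the unique white neighbor of `v` in the white component of `w` (together with `B`). -/
def psdForces {V : Type*} (G : SimpleGraph V) (B : Set V) (v w : V) : Prop :=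
  v ∈ B ∧ w ∉ B ∧ G.Adj v w ∧
    ∀ u, u ∉ B → G.Adj v u → offReach G B u w → u = w

/-- One round of PSD forcing: perform all possible forces. -/
def psdStep {V : Type*} (G : SimpleGraph V) (B : Set V) : Set V :=
  B ∪ {w | ∃ v, psdForces G B v w}

/-- `S` is a positive semidefinite zero forcing set. -/
def IsPSDForcingSet {V : Type*} (G : SimpleGraph V) (S : Set V) : Prop :=
  ∃ t, (psdStep G)^[t] S = Set.univ

/-- The PSD propagation time of `S`. -/
noncomputable def psdPt {V : Type*} (G : SimpleGraph V) (S : Set V) : ℕ :=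
  sInf {t | (psdStep G)^[t] S = Set.univ}

/-- The PSD throttling number of `G`. -/
noncomputable def psdTh {V : Type*} (G : SimpleGraph V) [Fintype V] : ℕ :=
  sInf {k | ∃ S : Finset V, IsPSDForcingSet G ↑S ∧ k = S.card + psdPt G ↑S}

lemma offReach_anti {V : Type*} (G : SimpleGraph V) {B B' : Set V} (h : B ⊆ B') :
    ∀ {a b}, offReach G B' a b → offReach G B a b :=
  fun hab => Relation.ReflTransGen.mono
    (fun _ _ ⟨hadj, hx, hy⟩ => ⟨hadj, fun hh => hx (h hh), fun hh => hy (h hh)⟩) _ _ hab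

lemma subset_psdStep {V : Type*} (G : SimpleGraph V) (B : Set V) : B ⊆ psdStep G B :=
  Set.subset_union_left

lemma psdStep_mono {V : Type*} (G : SimpleGraph V) {B B' : Set V} (h : B ⊆ B') :
    psdStep G B ⊆ psdStep G B' := by
  rintro x (hx | ⟨v, hv1, hv2, hv3, hv4⟩)
  · exact Or.inl (h hx)
  · by_cases hx' : x ∈ B'
    · exact Or.inl hx'
    · refine Or.inr ⟨v, h hv1, hx', hv3, fun u hu hadj hr => ?_⟩
      exact hv4 u (fun hh => hu (h hh)) hadj (offReach_anti G h hr)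

section Lift

variable {V : Type*} (G : SimpleGraph V) (W : Set V)

/-- extend a blue set of the induced subgraph to the whole graph -/
def extBlue (B : Set W) : Set V := (Subtype.val '' B) ∪ Wᶜ

lemma mem_extBlue_val {B : Set W} {a : W} : (a : V) ∈ extBlue W B ↔ a ∈ B := by
  constructor
  · rintro (⟨b, hb, hba⟩ | h)
    · rwa [Subtype.val_injective hba] at hb
    · exact absurd a.2 h
  · intro h; exact Or.inl ⟨a, h, rfl⟩

lemma mem_W_of_not_extBlue {B : Set W} {a : V} (h : a ∉ extBlue W B) : a ∈ W := by
  by_contra hW; exact h (Or.inr hW)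

lemma lift_offReach {B : Set W} {a b : V}
    (h : offReach G (extBlue W B) a b) :
    ∀ (ha : a ∈ W) (hb : b ∈ W), offReach (G.induce W) B ⟨a, ha⟩ ⟨b, hb⟩ := by
  induction h with
  | refl => intro ha hb; exact Relation.ReflTransGen.refl
  | tail h step ih =>
    intro ha hb
    obtain ⟨hadj, hc, hb'⟩ := step
    have hcW : _ ∈ W := mem_W_of_not_extBlue W hc
    refine (ih ha hcW).tail ⟨hadj, ?_, ?_⟩
    · exact fun hh => hc (Or.inl ⟨_, hh, rfl⟩)
    · exact fun hh => hb' (Or.inl ⟨_, hh, rfl⟩)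

lemma extBlue_step (B : Set W) :
    extBlue W (psdStep (G.induce W) B) ⊆ psdStep G (extBlue W B) := by
  rintro x (⟨w, hw, rfl⟩ | hx)
  · rcases hw with hw | ⟨v, hv1, hv2, hv3, hv4⟩
    · exact subset_psdStep G _ (Or.inl ⟨w, hw, rfl⟩)
    · refine Or.inr ⟨v, (mem_extBlue_val W).2 hv1, ?_, hv3, ?_⟩
      · exact fun hh => hv2 ((mem_extBlue_val W).1 hh)
      · intro u hu hadj hr
        have huW : u ∈ W := mem_W_of_not_extBlue W hu
        have := hv4 ⟨u, huW⟩ (fun hh => hu (Or.inl ⟨_, hh, rfl⟩)) hadj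
          (lift_offReach G W hr huW w.2)
        exact congrArg Subtype.val this
  · exact subset_psdStep G _ (Or.inr hx)

lemma extBlue_iterate (B : Set W) (t : ℕ) :
    extBlue W ((psdStep (G.induce W))^[t] B) ⊆ (psdStep G)^[t] (extBlue W B) := by
  induction t with
  | zero => exact subset_rfl
  | succ n ih =>
    rw [Function.iterate_succ_apply', Function.iterate_succ_apply']
    exact (extBlue_step G W _).trans (psdStep_mono G ih)

end Lift

theorem stmt_8 {V : Type*} [Fintype V] (G : SimpleGraph V)
    (W : Set V) [Fintype W] (k : ℕ) (hk : k = Fintype.card W) :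
    psdTh G ≤ Fintype.card V - k + psdTh (G.induce W) := by
  classical
  -- the set defining psdTh (G.induce W) is nonempty
  have hne : {m | ∃ S : Finset W, IsPSDForcingSet (G.induce W) ↑S ∧
      m = S.card + psdPt (G.induce W) ↑S}.Nonempty := by
    refine ⟨(Finset.univ : Finset W).card + psdPt (G.induce W) ↑(Finset.univ : Finset W),
      Finset.univ, ⟨0, by simp⟩, rfl⟩
  obtain ⟨S, hS, hSeq⟩ := Nat.sInf_mem hne
  obtain ⟨t0, ht0⟩ := hS
  have hpt : (psdStep (G.induce W))^[psdPt (G.induce W) ↑S] ↑S = Set.univ := by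
    have h : ({t | (psdStep (G.induce W))^[t] (↑S : Set W) = Set.univ}).Nonempty := ⟨t0, ht0⟩
    exact Nat.sInf_mem h
  set t := psdPt (G.induce W) (↑S : Set W) with htdef
  -- the extended blue set as a finset
  set T : Finset V := S.image Subtype.val ∪ Wᶜ.toFinset with hTdef
  have hTcoe : (↑T : Set V) = extBlue W ↑S := by
    simp [hTdef, extBlue, Set.image_eq_range]
  have hforce : (psdStep G)^[t] ↑T = Set.univ := by
    rw [hTcoe]
    apply Set.eq_univ_of_univ_subset
    have h1 : extBlue W ((psdStep (G.induce W))^[t] ↑S) ⊆ (psdStep G)^[t] (extBlue W ↑S) :=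
      extBlue_iterate G W _ t
    rw [hpt] at h1
    refine subset_trans ?_ h1
    intro x _
    by_cases hx : x ∈ W
    · exact Or.inl ⟨⟨x, hx⟩, trivial, rfl⟩
    · exact Or.inr hx
  have hptG : psdPt G ↑T ≤ t := Nat.sInf_le hforce
  have hcard : T.card ≤ S.card + (Fintype.card V - k) := by
    calc T.card ≤ (S.image Subtype.val).card + Wᶜ.toFinset.card := Finset.card_union_le _ _
    _ = S.card + (Fintype.card V - k) := by
        rw [Finset.card_image_of_injective _ Subtype.val_injective, Set.toFinset_card,
          Fintype.card_compl_set, hk]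
  have hTh : psdTh G ≤ T.card + psdPt G ↑T :=
    Nat.sInf_le ⟨T, ⟨t, hforce⟩, rfl⟩
  have : psdTh G ≤ (S.card + (Fintype.card V - k)) + t :=
    hTh.trans (Nat.add_le_add hcard hptG)
  rw [show psdTh (G.induce W) = S.card + t from hSeq]
  omega
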